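/- Let C ⊆ ℝ^d be a pointed cone generated by finitely many vectors, let τ : ℝ^d → ℝ be a linear functional with τ ≥ 0 on C, set F = C ∩ ker τ, and fix a real number s ≥ 0. Then every b ∈ C with τ(b) ≥ s lies in b'' + C for some point b'' ∈ C with τ(b'') = s that belongs to an exposed face D of C (that is, D = C ∩ ker λ for some linear functional λ : ℝ^d → ℝ with λ ≥ 0 on C) satisfying D ∩ F = {0}. -/

import Mathlib

open Pointwise



section ConeL
variable {E : Type*} [AddCommGroup E] [Module ℝ E]

def coneL : List E → Set E
  | [] => {0}
  | u :: L => {x | ∃ t : ℝ, 0 ≤ t ∧ ∃ y ∈ coneL L, x = t • u + y}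

lemma mem_coneL_nil {x : E} : x ∈ coneL ([] : List E) ↔ x = 0 := Iff.rfl

lemma mem_coneL_cons {u : E} {L : List E} {x : E} :
    x ∈ coneL (u :: L) ↔ ∃ t : ℝ, 0 ≤ t ∧ ∃ y ∈ coneL L, x = t • u + y := Iff.rfl

lemma coneL_nonneg (φ : E →ₗ[ℝ] ℝ) :
    ∀ (L : List E), (∀ u ∈ L, 0 ≤ φ u) → ∀ x ∈ coneL L, 0 ≤ φ x := by
  intro L
  induction L with
  | nil => intro _ x hx; rw [mem_coneL_nil] at hx; simp [hx]
  | cons u L ih =>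
    intro h x hx
    obtain ⟨t, ht, y, hy, rfl⟩ := hx
    have h1 : 0 ≤ φ u := h u (List.mem_cons_self)
    have h2 : 0 ≤ φ y := ih (fun w hw => h w (List.mem_cons_of_mem _ hw)) y hy
    rw [map_add, map_smul, smul_eq_mul]
    exact add_nonneg (mul_nonneg ht h1) h2

lemma coneL_map (T : E →ₗ[ℝ] E) : ∀ L : List E, coneL (L.map T) = T '' coneL L := by
  intro L
  induction L with
  | nil => simp [coneL]
  | cons u L ih =>
    ext x
    simp only [List.map_cons, mem_coneL_cons, ih]
    constructor
    · rintro ⟨t, ht, y, ⟨y', hy', rfl⟩, rfl⟩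
      exact ⟨t • u + y', ⟨t, ht, y', hy', rfl⟩, by simp [map_add, map_smul]⟩
    · rintro ⟨w, ⟨t, ht, y', hy', rfl⟩, rfl⟩
      exact ⟨t, ht, T y', ⟨y', hy', rfl⟩, by simp [map_add, map_smul]⟩

lemma mem_coneL_append {l₁ l₂ : List E} {x : E} :
    x ∈ coneL (l₁ ++ l₂) ↔ ∃ y ∈ coneL l₁, ∃ z ∈ coneL l₂, x = y + z := by
  induction l₁ generalizing x with
  | nil =>
    simp only [List.nil_append, mem_coneL_nil]
    constructor
    · intro hx; exact ⟨0, rfl, x, hx, (zero_add x).symm⟩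
    · rintro ⟨y, rfl, z, hz, rfl⟩; simpa using hz
  | cons u L ih =>
    constructor
    · rintro ⟨t, ht, y, hy, rfl⟩
      obtain ⟨y₁, hy₁, y₂, hy₂, rfl⟩ := ih.mp hy
      exact ⟨t • u + y₁, ⟨t, ht, y₁, hy₁, rfl⟩, y₂, hy₂, (add_assoc _ _ _).symm⟩
    · rintro ⟨y, ⟨t, ht, y₁, hy₁, rfl⟩, z, hz, rfl⟩
      exact ⟨t, ht, y₁ + z, ih.mpr ⟨y₁, hy₁, z, hz, rfl⟩, add_assoc _ _ _⟩

lemma coneL_ofFn : ∀ {m : ℕ} (v : Fin m → E),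
    coneL (List.ofFn v) = {y | ∃ c : Fin m → ℝ, (∀ i, 0 ≤ c i) ∧ y = ∑ i, c i • v i} := by
  intro m
  induction m with
  | zero =>
    intro v; ext x
    simp only [List.ofFn_zero, mem_coneL_nil, Set.mem_setOf_eq]
    constructor
    · rintro rfl; exact ⟨0, fun i => le_rfl, by simp⟩
    · rintro ⟨c, _, rfl⟩; simp
  | succ n ih =>
    intro v
    ext x
    rw [List.ofFn_succ]
    simp only [mem_coneL_cons, ih, Set.mem_setOf_eq]
    constructor
    · rintro ⟨t, ht, y, ⟨c, hc, rfl⟩, rfl⟩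
      refine ⟨Fin.cons t c, ?_, ?_⟩
      · intro i; refine Fin.cases ?_ ?_ i
        · simpa using ht
        · intro j; simpa using hc j
      · rw [Fin.sum_univ_succ]; simp
    · rintro ⟨c, hc, rfl⟩
      exact ⟨c 0, hc 0, ∑ i : Fin n, c i.succ • v i.succ,
        ⟨fun i => c i.succ, fun i => hc _, rfl⟩, by rw [Fin.sum_univ_succ]⟩

theorem farkas_aux (hsep : ∀ z : E, z ≠ 0 → ∃ φ : E →ₗ[ℝ] ℝ, φ z < 0) :
    ∀ (n : ℕ) (L : List E), L.length = n → ∀ z : E, z ∉ coneL L →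
      ∃ φ : E →ₗ[ℝ] ℝ, (∀ u ∈ L, 0 ≤ φ u) ∧ φ z < 0 := by
  intro n
  induction n with
  | zero =>
    intro L hL z hz
    rw [List.length_eq_zero_iff] at hL; subst hL
    obtain ⟨φ, hφ⟩ := hsep z (by simpa [mem_coneL_nil] using hz)
    exact ⟨φ, by simp, hφ⟩
  | succ n ih =>
    intro L hL z hz
    rcases L with _ | ⟨u, L⟩
    · simp at hL
    have hL' : L.length = n := by simpa using hL
    have hzL : z ∉ coneL L := fun h => hz ⟨0, le_rfl, z, h, by simp⟩
    obtain ⟨φ, hφL, hφz⟩ := ih L hL' z hzL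
    by_cases hu : 0 ≤ φ u
    · refine ⟨φ, ?_, hφz⟩
      intro w hw
      rcases List.mem_cons.mp hw with rfl | hw
      · exact hu
      · exact hφL w hw
    · push_neg at hu
      have hφune : φ u ≠ 0 := ne_of_lt hu
      set T : E →ₗ[ℝ] E := LinearMap.id - (φ u)⁻¹ • (LinearMap.smulRight φ u) with hT
      have hTapp : ∀ x, T x = x - ((φ u)⁻¹ * φ x) • u := by
        intro x
        simp [hT, LinearMap.smulRight, smul_smul]
      have hzT : T z ∉ coneL (L.map T) := by
        rw [coneL_map]
        rintro ⟨y, hy, hTy⟩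
        apply hz
        have hφy : 0 ≤ φ y := coneL_nonneg φ L hφL y hy
        refine ⟨(φ u)⁻¹ * (φ z - φ y), ?_, y, hy, ?_⟩
        · have h1 : φ z - φ y < 0 := by linarith
          have h2 : (φ u)⁻¹ < 0 := inv_lt_zero.mpr hu
          exact le_of_lt (mul_pos_of_neg_of_neg h2 h1)
        · have h1 := hTapp z
          have h2 := hTapp y
          rw [h2] at hTy
          rw [← hTy] at h1
          -- h1 : y - ((φ u)⁻¹ * φ y) • u = z - ((φ u)⁻¹ * φ z) • u
          have h3 : z = y - ((φ u)⁻¹ * φ y) • u + ((φ u)⁻¹ * φ z) • u :=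
            sub_eq_iff_eq_add.mp h1.symm
          rw [mul_sub, sub_smul]
          conv_lhs => rw [h3]
          abel
      obtain ⟨ψ, hψL, hψz⟩ := ih (L.map T) (by simpa using hL') (T z) hzT
      refine ⟨ψ - ((ψ u) / (φ u)) • φ, ?_, ?_⟩
      · intro w hw
        rcases List.mem_cons.mp hw with h | hw
        · subst h
          have : (ψ - ((ψ w) / (φ w)) • φ) w = ψ w - ψ w / φ w * φ w := by
            simp [div_eq_mul_inv]
          rw [this, div_mul_cancel₀ _ hφune, sub_self]
        · have hmem : T w ∈ L.map T := List.mem_map_of_mem hw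
          have := hψL (T w) hmem
          rw [hTapp] at this
          rw [map_sub, map_smul, smul_eq_mul] at this
          have heq : (ψ - ((ψ u) / (φ u)) • φ) w = ψ w - (φ u)⁻¹ * φ w * ψ u := by
            simp [div_eq_mul_inv]; ring
          rw [heq]; linarith
      · have := hψz
        rw [hTapp, map_sub, map_smul, smul_eq_mul] at this
        have heq : (ψ - ((ψ u) / (φ u)) • φ) z = ψ z - (φ u)⁻¹ * φ z * ψ u := by
          simp [div_eq_mul_inv]; ring
        rw [heq]; linarith

end ConeL

section Hsep

lemma hsep_pi {n : ℕ} : ∀ z : Fin n → ℝ, z ≠ 0 → ∃ φ : (Fin n → ℝ) →ₗ[ℝ] ℝ, φ z < 0 := by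
  intro z hz
  refine ⟨-∑ i, z i • LinearMap.proj i, ?_⟩
  obtain ⟨i, hi⟩ : ∃ i, z i ≠ 0 := by
    by_contra h; push_neg at h; exact hz (funext h)
  simp only [LinearMap.neg_apply, LinearMap.coe_sum, Finset.sum_apply, LinearMap.smul_apply,
    LinearMap.proj_apply, smul_eq_mul]
  have : 0 < ∑ j, z j * z j :=
    Finset.sum_pos' (fun j _ => mul_self_nonneg _) ⟨i, Finset.mem_univ i, mul_self_pos.mpr hi⟩
  linarith

lemma hsep_prod {d : ℕ} :
    ∀ z : (Fin d → ℝ) × ℝ × ℝ, z ≠ 0 →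
      ∃ φ : ((Fin d → ℝ) × ℝ × ℝ) →ₗ[ℝ] ℝ, φ z < 0 := by
  intro z hz
  set π1 : ((Fin d → ℝ) × ℝ × ℝ) →ₗ[ℝ] (Fin d → ℝ) := LinearMap.fst ℝ _ _
  set π2 : ((Fin d → ℝ) × ℝ × ℝ) →ₗ[ℝ] ℝ := (LinearMap.fst ℝ ℝ ℝ).comp (LinearMap.snd ℝ _ _)
  set π3 : ((Fin d → ℝ) × ℝ × ℝ) →ₗ[ℝ] ℝ := (LinearMap.snd ℝ ℝ ℝ).comp (LinearMap.snd ℝ _ _)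
  refine ⟨-((∑ i, z.1 i • ((LinearMap.proj i).comp π1)) + z.2.1 • π2 + z.2.2 • π3), ?_⟩
  have hcomp : z.1 ≠ 0 ∨ z.2.1 ≠ 0 ∨ z.2.2 ≠ 0 := by
    by_contra h; push_neg at h
    exact hz (Prod.ext_iff.mpr ⟨h.1, Prod.ext_iff.mpr ⟨h.2.1, h.2.2⟩⟩)
  have e1 : 0 ≤ ∑ j, z.1 j * z.1 j := Finset.sum_nonneg fun j _ => mul_self_nonneg _
  have e2 : 0 ≤ z.2.1 * z.2.1 := mul_self_nonneg _
  have e3 : 0 ≤ z.2.2 * z.2.2 := mul_self_nonneg _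
  have key : 0 < (∑ j, z.1 j * z.1 j) + z.2.1 * z.2.1 + z.2.2 * z.2.2 := by
    rcases hcomp with h | h | h
    · obtain ⟨i, hi⟩ : ∃ i, z.1 i ≠ 0 := by
        by_contra hh; push_neg at hh; exact h (funext hh)
      have : 0 < ∑ j, z.1 j * z.1 j :=
        Finset.sum_pos' (fun j _ => mul_self_nonneg _) ⟨i, Finset.mem_univ i, mul_self_pos.mpr hi⟩
      linarith
    · have := mul_self_pos.mpr h; linarith
    · have := mul_self_pos.mpr h; linarith
  simp only [LinearMap.neg_apply, LinearMap.add_apply, LinearMap.coe_sum, Finset.sum_apply,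
    LinearMap.smul_apply, LinearMap.comp_apply, LinearMap.proj_apply, smul_eq_mul,
    π1, π2, π3, LinearMap.fst_apply, LinearMap.snd_apply]
  linarith

end Hsep


set_option maxHeartbeats 2000000 in
theorem stmt5 {d m : ℕ} (v : Fin m → (Fin d → ℝ))
    (C : Set (Fin d → ℝ))
    (hC : C = {y | ∃ c : Fin m → ℝ, (∀ i, 0 ≤ c i) ∧ y = ∑ i, c i • v i})
    (hpointed : C ∩ (-C) = {0})
    (τ : (Fin d → ℝ) →ₗ[ℝ] ℝ) (hτ : ∀ x ∈ C, 0 ≤ τ x)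
    (F : Set (Fin d → ℝ)) (hF : F = {x | x ∈ C ∧ τ x = 0})
    (s : ℝ) (hs : 0 ≤ s)
    (b : Fin d → ℝ) (hb : b ∈ C) (hsb : s ≤ τ b) :
    ∃ b'' ∈ C, τ b'' = s ∧
      (∃ lam : (Fin d → ℝ) →ₗ[ℝ] ℝ, (∀ x ∈ C, 0 ≤ lam x) ∧
        b'' ∈ {x | x ∈ C ∧ lam x = 0} ∧ {x | x ∈ C ∧ lam x = 0} ∩ F = {0}) ∧
      b ∈ b'' +ᵥ C := by
  classical
  have memC : ∀ c : Fin m → ℝ, (∀ i, 0 ≤ c i) → (∑ i, c i • v i) ∈ C := by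
    intro c hc; rw [hC]; exact ⟨c, hc, rfl⟩
  have repC : ∀ x ∈ C, ∃ c : Fin m → ℝ, (∀ i, 0 ≤ c i) ∧ x = ∑ i, c i • v i := by
    intro x hx; rw [hC] at hx; exact hx
  have hvC : ∀ i, v i ∈ C := by
    intro i
    have h1 : v i = ∑ j, (if j = i then (1:ℝ) else 0) • v j := by
      simp [ite_smul]
    rw [h1]; exact memC _ (fun j => by split <;> norm_num)
  have τsum : ∀ c : Fin m → ℝ, τ (∑ i, c i • v i) = ∑ i, c i * τ (v i) := by
    intro c; rw [map_sum]; simp [smul_eq_mul]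
  have hτv : ∀ i, 0 ≤ τ (v i) := fun i => hτ _ (hvC i)
  have hconeC : coneL (List.ofFn v) = C := by rw [coneL_ofFn, hC]
  -- a functional strictly positive on the nonzero generators
  have hσi : ∀ i : Fin m, ∃ σi : (Fin d → ℝ) →ₗ[ℝ] ℝ,
      (∀ j, 0 ≤ σi (v j)) ∧ (v i ≠ 0 → 0 < σi (v i)) := by
    intro i
    by_cases hvi : v i = 0
    · exact ⟨0, by simp, fun h => absurd hvi h⟩
    · have hmem : -(v i) ∉ coneL (List.ofFn v) := by
        rw [hconeC]
        intro hmemC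
        have hvin : v i ∈ C ∩ (-C) := ⟨hvC i, by simpa [Set.mem_neg] using hmemC⟩
        rw [hpointed] at hvin
        exact hvi hvin
      obtain ⟨φ, hφ1, hφ2⟩ := farkas_aux hsep_pi _ (List.ofFn v) rfl _ hmem
      refine ⟨φ, fun j => hφ1 (v j) (List.mem_ofFn.mpr ⟨j, rfl⟩), fun _ => ?_⟩
      rw [map_neg] at hφ2; linarith
  choose σi hσ1 hσ2 using hσi
  set σ : (Fin d → ℝ) →ₗ[ℝ] ℝ := ∑ i, σi i with hσdef
  have hσapp : ∀ x, σ x = ∑ i, σi i x := by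
    intro x; rw [hσdef]; simp
  have hσ0 : ∀ j, 0 ≤ σ (v j) := fun j => by
    rw [hσapp]; exact Finset.sum_nonneg fun i _ => hσ1 i j
  have hσpos : ∀ j, v j ≠ 0 → 0 < σ (v j) := fun j hj => by
    rw [hσapp]; exact Finset.sum_pos' (fun i _ => hσ1 i j) ⟨j, Finset.mem_univ _, hσ2 j hj⟩
  have σsum : ∀ c : Fin m → ℝ, σ (∑ i, c i • v i) = ∑ i, c i * σ (v i) := by
    intro c; rw [map_sum]; simp [smul_eq_mul]
  -- the feasible set of the linear program
  set Y : Set ((Fin m → ℝ) × (Fin m → ℝ)) :=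
    {y | (∀ i, 0 ≤ y.1 i) ∧ (∀ i, 0 ≤ y.2 i) ∧ (∀ i, v i = 0 → y.1 i = 0 ∧ y.2 i = 0) ∧
      (∑ i, (y.1 i + y.2 i) • v i = b) ∧ (∑ i, y.1 i * τ (v i) = s)} with hYdef
  obtain ⟨c0, hc0, hbc0⟩ := repC b hb
  set c : Fin m → ℝ := fun i => if v i = 0 then 0 else c0 i with hcdef
  have hc : ∀ i, 0 ≤ c i := fun i => by
    rw [hcdef]; dsimp only; split
    · exact le_rfl
    · exact hc0 i
  have hczero : ∀ i, v i = 0 → c i = 0 := fun i h => by rw [hcdef]; simp [h]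
  have hbc : ∑ i, c i • v i = b := by
    rw [hbc0]; apply Finset.sum_congr rfl; intro i _
    by_cases h : v i = 0 <;> simp [hcdef, h]
  have hτb : τ b = ∑ i, c i * τ (v i) := by rw [← hbc, τsum]
  have ht0 : 0 ≤ τ b := hτ b hb
  have hYne : Y.Nonempty := by
    rcases eq_or_lt_of_le ht0 with h | h
    · have hs0 : s = 0 := le_antisymm (le_trans hsb h.symm.le) hs
      refine ⟨(0, c), ?_⟩
      rw [hYdef]
      refine ⟨fun i => le_rfl, hc, fun i hi => ⟨rfl, hczero i hi⟩, ?_, ?_⟩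
      · simpa using hbc
      · simp [hs0]
    · set θ := s / τ b with hθdef
      have hθ0 : 0 ≤ θ := div_nonneg hs ht0
      have hθ1 : θ ≤ 1 := (div_le_one h).mpr hsb
      refine ⟨(fun i => θ * c i, fun i => (1 - θ) * c i), ?_⟩
      rw [hYdef]
      refine ⟨fun i => mul_nonneg hθ0 (hc i), fun i => mul_nonneg (by linarith) (hc i),
        fun i hi => by simp [hczero i hi], ?_, ?_⟩
      · calc ∑ i, (θ * c i + (1 - θ) * c i) • v i = ∑ i, c i • v i :=
              Finset.sum_congr rfl fun i _ => by rw [show θ * c i + (1 - θ) * c i = c i from by ring]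
          _ = b := hbc
      · have h1 : ∑ i, θ * c i * τ (v i) = θ * ∑ i, c i * τ (v i) := by
          rw [Finset.mul_sum]; exact Finset.sum_congr rfl fun i _ => by ring
        rw [h1, ← hτb, hθdef]
        field_simp
  have hYclosed : IsClosed Y := by
    rw [hYdef]
    simp only [Set.setOf_and]
    refine IsClosed.inter ?_ (IsClosed.inter ?_ (IsClosed.inter ?_ (IsClosed.inter ?_ ?_)))
    · rw [Set.setOf_forall]
      exact isClosed_iInter fun i =>
        isClosed_le continuous_const ((continuous_apply i).comp continuous_fst)
    · rw [Set.setOf_forall]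
      exact isClosed_iInter fun i =>
        isClosed_le continuous_const ((continuous_apply i).comp continuous_snd)
    · rw [Set.setOf_forall]
      refine isClosed_iInter fun i => ?_
      by_cases hvi : v i = 0
      · simp only [hvi, forall_true_left]
        exact IsClosed.inter
          (isClosed_eq ((continuous_apply i).comp continuous_fst) continuous_const)
          (isClosed_eq ((continuous_apply i).comp continuous_snd) continuous_const)
      · simp [hvi]
    · exact isClosed_eq (continuous_finset_sum _ fun i _ =>
        (((continuous_apply i).comp continuous_fst).add
          ((continuous_apply i).comp continuous_snd)).smul continuous_const) continuous_const
    · exact isClosed_eq (continuous_finset_sum _ fun i _ =>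
        ((continuous_apply i).comp continuous_fst).mul continuous_const) continuous_const
  set bd : Fin m → ℝ := fun i => if v i = 0 then 0 else σ b / σ (v i) with hbddef
  have hYsub : Y ⊆ Set.Icc ((0,0) : (Fin m → ℝ) × (Fin m → ℝ)) (bd, bd) := by
    intro y hy
    rw [hYdef] at hy
    obtain ⟨h1, h2, h3, h4, h5⟩ := hy
    have hσb : ∑ i, (y.1 i + y.2 i) * σ (v i) = σ b := by rw [← h4, σsum]
    have key : ∀ i, y.1 i ≤ bd i ∧ y.2 i ≤ bd i := by
      intro i
      by_cases hvi : v i = 0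
      · rw [hbddef]; dsimp only; rw [if_pos hvi, (h3 i hvi).1, (h3 i hvi).2]
        exact ⟨le_rfl, le_rfl⟩
      · have hpos := hσpos i hvi
        have hterm : (y.1 i + y.2 i) * σ (v i) ≤ σ b := by
          rw [← hσb]
          exact Finset.single_le_sum (f := fun j => (y.1 j + y.2 j) * σ (v j))
            (fun j _ => mul_nonneg (add_nonneg (h1 j) (h2 j)) (hσ0 j)) (Finset.mem_univ i)
        constructor
        · rw [hbddef]; dsimp only; rw [if_neg hvi, le_div_iff₀ hpos]
          nlinarith [h2 i, hpos]
        · rw [hbddef]; dsimp only; rw [if_neg hvi, le_div_iff₀ hpos]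
          nlinarith [h1 i, hpos]
    rw [Set.mem_Icc, Prod.le_def, Prod.le_def]
    exact ⟨⟨fun i => h1 i, fun i => h2 i⟩, ⟨fun i => (key i).1, fun i => (key i).2⟩⟩
  have hYcomp : IsCompact Y := (isCompact_Icc).of_isClosed_subset hYclosed hYsub
  set f : ((Fin m → ℝ) × (Fin m → ℝ)) → ℝ := fun y => ∑ i, y.1 i * σ (v i) with hfdef
  have hfc : Continuous f := continuous_finset_sum _ fun i _ =>
    ((continuous_apply i).comp continuous_fst).mul continuous_const
  obtain ⟨p, hpY, hpmin⟩ := hYcomp.exists_isMinOn hYne hfc.continuousOn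
  have hpmin' : ∀ y ∈ Y, f p ≤ f y := fun y hy => hpmin hy
  have hpY' := hpY
  rw [hYdef] at hpY'
  obtain ⟨ha1, ha2, ha3, ha4, ha5⟩ := hpY'
  set ν := f p with hνdef
  set b'' : Fin d → ℝ := ∑ i, p.1 i • v i with hbppdef
  have hb''C : b'' ∈ C := memC _ ha1
  have hτb'' : τ b'' = s := by rw [hbppdef, τsum]; exact ha5
  have hsplit : b'' + ∑ i, p.2 i • v i = b := by
    rw [hbppdef, ← Finset.sum_add_distrib, ← ha4]
    exact Finset.sum_congr rfl fun i _ => (add_smul _ _ _).symm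
  have hbb''C : b - b'' ∈ C := by
    have h1 : b - b'' = ∑ i, p.2 i • v i := by rw [← hsplit]; abel
    rw [h1]; exact memC _ ha2
  -- the KKT certificate via Farkas in dimension d + 2
  set gv : Fin m → ((Fin d → ℝ) × ℝ × ℝ) := fun i => (v i, τ (v i), σ (v i)) with hgdef
  set hv : Fin m → ((Fin d → ℝ) × ℝ × ℝ) := fun i => (v i, 0, 0) with hhdef
  set rvec : ((Fin d → ℝ) × ℝ × ℝ) := (0, 0, 1) with hrdef
  set wvec : ((Fin d → ℝ) × ℝ × ℝ) := -(b, s, ν) with hwdef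
  set G : List ((Fin d → ℝ) × ℝ × ℝ) := wvec :: rvec :: (List.ofFn gv ++ List.ofFn hv)
    with hGdef
  have hzG : ((b, s, ν - 1) : (Fin d → ℝ) × ℝ × ℝ) ∉ coneL G := by
    intro hmem
    rw [hGdef, mem_coneL_cons] at hmem
    obtain ⟨ρ₁, hρ₁, x₁, hx₁, hzeq⟩ := hmem
    rw [mem_coneL_cons] at hx₁
    obtain ⟨ρ₂, hρ₂, x₂, hx₂, rfl⟩ := hx₁
    rw [mem_coneL_append] at hx₂
    obtain ⟨xg, hxg, xh, hxh, rfl⟩ := hx₂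
    rw [coneL_ofFn] at hxg hxh
    obtain ⟨α, hα, rfl⟩ := hxg
    obtain ⟨β, hβ, rfl⟩ := hxh
    have e1 : b = ρ₁ • (-b) + (ρ₂ • (0 : Fin d → ℝ) +
        (∑ i, α i • v i + ∑ i, β i • v i)) := by
      have h := congrArg (⇑(LinearMap.fst ℝ (Fin d → ℝ) (ℝ × ℝ))) hzeq
      simpa [map_add, map_smul, map_sum, map_neg, hwdef, hrdef, hgdef, hhdef] using h
    have e2 : s = -(ρ₁ * s) + ∑ i, α i * τ (v i) := by
      have h := congrArg
        (⇑((LinearMap.fst ℝ ℝ ℝ).comp (LinearMap.snd ℝ (Fin d → ℝ) (ℝ × ℝ)))) hzeq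
      simpa [map_add, map_smul, map_sum, map_neg, hwdef, hrdef, hgdef, hhdef,
        smul_eq_mul] using h
    have e3 : ν - 1 = -(ρ₁ * ν) + (ρ₂ + ∑ i, α i * σ (v i)) := by
      have h := congrArg
        (⇑((LinearMap.snd ℝ ℝ ℝ).comp (LinearMap.snd ℝ (Fin d → ℝ) (ℝ × ℝ)))) hzeq
      simpa [map_add, map_smul, map_sum, map_neg, hwdef, hrdef, hgdef, hhdef,
        smul_eq_mul] using h
    set κ : ℝ := 1 + ρ₁ with hκdef
    have hκpos : 0 < κ := by rw [hκdef]; linarith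
    have h2 : ∑ i, α i • v i + ∑ i, β i • v i = κ • b := by
      rw [smul_neg, smul_zero, zero_add] at e1
      have h4 : ρ₁ • b + b = ∑ i, α i • v i + ∑ i, β i • v i :=
        eq_neg_add_iff_add_eq.mp e1
      rw [hκdef, add_smul, one_smul, ← h4]; abel
    have hτα : ∑ i, α i * τ (v i) = κ * s := by rw [hκdef]; linarith
    have hσα : ∑ i, α i * σ (v i) = κ * ν - 1 - ρ₂ := by rw [hκdef]; linarith
    set y1 : Fin m → ℝ := fun i => if v i = 0 then 0 else α i / κ with hy1def
    set y2 : Fin m → ℝ := fun i => if v i = 0 then 0 else β i / κ with hy2def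
    have hyY : ((y1, y2) : (Fin m → ℝ) × (Fin m → ℝ)) ∈ Y := by
      rw [hYdef]
      refine ⟨?_, ?_, ?_, ?_, ?_⟩
      · intro i; rw [hy1def]; dsimp only; split
        · exact le_rfl
        · exact div_nonneg (hα i) hκpos.le
      · intro i; rw [hy2def]; dsimp only; split
        · exact le_rfl
        · exact div_nonneg (hβ i) hκpos.le
      · intro i hi; constructor
        · rw [hy1def]; simp [hi]
        · rw [hy2def]; simp [hi]
      · have step1 : ∑ i, (y1 i + y2 i) • v i = ∑ i, ((α i + β i)/κ) • v i := by
          refine Finset.sum_congr rfl fun i _ => ?_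
          by_cases hvi : v i = 0
          · rw [hvi, smul_zero, smul_zero]
          · rw [hy1def, hy2def]; dsimp only; rw [if_neg hvi, if_neg hvi, ← add_div]
        have step3 : ∑ i, ((α i + β i)/κ) • v i = κ⁻¹ • (∑ i, α i • v i + ∑ i, β i • v i) := by
          rw [← Finset.sum_add_distrib, Finset.smul_sum]
          refine Finset.sum_congr rfl fun i _ => ?_
          rw [← add_smul, smul_smul, div_eq_inv_mul]
        rw [step1, step3, h2, smul_smul, inv_mul_cancel₀ hκpos.ne', one_smul]
      · have step1 : ∑ i, y1 i * τ (v i) = κ⁻¹ * ∑ i, α i * τ (v i) := by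
          rw [Finset.mul_sum]
          refine Finset.sum_congr rfl fun i _ => ?_
          by_cases hvi : v i = 0
          · rw [hy1def]; dsimp only; rw [if_pos hvi, hvi, map_zero]; ring
          · rw [hy1def]; dsimp only; rw [if_neg hvi, div_eq_inv_mul]; ring
        rw [step1, hτα, ← mul_assoc, inv_mul_cancel₀ hκpos.ne', one_mul]
    have hlt : f ((y1, y2) : (Fin m → ℝ) × (Fin m → ℝ)) < f p := by
      have hval : f ((y1, y2) : (Fin m → ℝ) × (Fin m → ℝ)) = κ⁻¹ * ∑ i, α i * σ (v i) := by
        rw [hfdef]; dsimp only; rw [Finset.mul_sum]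
        refine Finset.sum_congr rfl fun i _ => ?_
        by_cases hvi : v i = 0
        · rw [hy1def]; dsimp only; rw [if_pos hvi, hvi, map_zero]; ring
        · rw [hy1def]; dsimp only; rw [if_neg hvi, div_eq_inv_mul]; ring
      rw [hval, hσα]
      have hκinv : 0 < κ⁻¹ := inv_pos.mpr hκpos
      have hexp : κ⁻¹ * (κ * ν - 1 - ρ₂) = ν - (1 + ρ₂) * κ⁻¹ := by
        field_simp
        ring
      rw [hexp, ← hνdef]
      have hp2 : 0 < (1 + ρ₂) * κ⁻¹ := mul_pos (by linarith) hκinv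
      linarith
    exact absurd (hpmin' _ hyY) (not_le.mpr hlt)
  obtain ⟨ψ, hψG, hψz⟩ := farkas_aux hsep_prod _ G rfl _ hzG
  have hψw : 0 ≤ ψ wvec := hψG wvec (by rw [hGdef]; exact List.mem_cons_self)
  have hψr : 0 ≤ ψ rvec := hψG rvec
    (by rw [hGdef]; exact List.mem_cons_of_mem _ (List.mem_cons_self))
  have hψg : ∀ i, 0 ≤ ψ (gv i) := fun i => hψG _
    (by rw [hGdef]
        exact List.mem_cons_of_mem _ (List.mem_cons_of_mem _
          (List.mem_append_left _ (List.mem_ofFn.mpr ⟨i, rfl⟩))))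
  have hψh : ∀ i, 0 ≤ ψ (hv i) := fun i => hψG _
    (by rw [hGdef]
        exact List.mem_cons_of_mem _ (List.mem_cons_of_mem _
          (List.mem_append_right _ (List.mem_ofFn.mpr ⟨i, rfl⟩))))
  have hbsν : ((b, s, ν) : (Fin d → ℝ) × ℝ × ℝ) = ∑ i, p.1 i • gv i + ∑ i, p.2 i • hv i := by
    rw [Prod.ext_iff, Prod.ext_iff]
    refine ⟨?_, ?_, ?_⟩
    · simp only [Prod.fst_add, Prod.fst_sum, hgdef, hhdef, Prod.smul_fst]
      exact hsplit.symm
    · simp only [Prod.snd_add, Prod.snd_sum, Prod.fst_add, Prod.fst_sum, hgdef, hhdef,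
        Prod.smul_snd, Prod.smul_fst, smul_eq_mul]
      rw [← ha5]; simp
    · simp only [Prod.snd_add, Prod.snd_sum, hgdef, hhdef, Prod.smul_snd, smul_eq_mul]
      rw [hνdef, hfdef]; simp
  have hψsum : ψ ((b, s, ν) : (Fin d → ℝ) × ℝ × ℝ)
      = ∑ i, p.1 i * ψ (gv i) + ∑ i, p.2 i * ψ (hv i) := by
    rw [hbsν, map_add, map_sum, map_sum]
    simp [smul_eq_mul]
  have hle : ψ ((b, s, ν) : (Fin d → ℝ) × ℝ × ℝ) ≤ 0 := by
    have h1 : ψ wvec = -ψ ((b, s, ν) : (Fin d → ℝ) × ℝ × ℝ) := by rw [hwdef, map_neg]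
    rw [h1] at hψw; linarith
  have hge1 : 0 ≤ ∑ i, p.1 i * ψ (gv i) :=
    Finset.sum_nonneg fun i _ => mul_nonneg (ha1 i) (hψg i)
  have hge2 : 0 ≤ ∑ i, p.2 i * ψ (hv i) :=
    Finset.sum_nonneg fun i _ => mul_nonneg (ha2 i) (hψh i)
  have hsum10 : ∑ i, p.1 i * ψ (gv i) = 0 := by linarith
  have hψbsν0 : ψ ((b, s, ν) : (Fin d → ℝ) × ℝ × ℝ) = 0 := by linarith
  have hterm : ∀ i, p.1 i * ψ (gv i) = 0 := by
    intro i
    exact (Finset.sum_eq_zero_iff_of_nonneg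
      (fun i _ => mul_nonneg (ha1 i) (hψg i))).mp hsum10 i (Finset.mem_univ i)
  have hη : 0 < ψ rvec := by
    have h1 : ((b, s, ν - 1) : (Fin d → ℝ) × ℝ × ℝ) = (b, s, ν) - rvec := by
      rw [hrdef]; rw [Prod.ext_iff, Prod.ext_iff]; simp
    rw [h1, map_sub, hψbsν0] at hψz
    linarith
  set η := ψ rvec with hηdef
  set J : (Fin d → ℝ) →ₗ[ℝ] ((Fin d → ℝ) × ℝ × ℝ) :=
    LinearMap.prod LinearMap.id (LinearMap.prod τ σ) with hJdef
  set lam : (Fin d → ℝ) →ₗ[ℝ] ℝ := η⁻¹ • (ψ.comp J) with hlamdef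
  have hJv : ∀ i, J (v i) = gv i := by
    intro i; rw [hJdef, hgdef]; rfl
  have hlamv : ∀ i, lam (v i) = η⁻¹ * ψ (gv i) := by
    intro i; rw [hlamdef]; simp [hJv i]
  have hlamv0 : ∀ i, 0 ≤ lam (v i) := fun i => by
    rw [hlamv]; exact mul_nonneg (inv_nonneg.mpr hη.le) (hψg i)
  have lamsum : ∀ c : Fin m → ℝ, lam (∑ i, c i • v i) = ∑ i, c i * lam (v i) := by
    intro c; rw [map_sum]; simp [smul_eq_mul]
  have hlamC : ∀ x ∈ C, 0 ≤ lam x := by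
    intro x hx
    obtain ⟨c', hc', rfl⟩ := repC x hx
    rw [lamsum]
    exact Finset.sum_nonneg fun i _ => mul_nonneg (hc' i) (hlamv0 i)
  have hlamb'' : lam b'' = 0 := by
    rw [hbppdef, lamsum]
    apply Finset.sum_eq_zero
    intro i _
    rw [hlamv]
    have h1 : p.1 i * (η⁻¹ * ψ (gv i)) = η⁻¹ * (p.1 i * ψ (gv i)) := by ring
    rw [h1, hterm i, mul_zero]
  have h0C : (0 : Fin d → ℝ) ∈ C := by
    have := memC (fun _ => 0) (fun _ => le_rfl)
    simpa using this
  have hface : {x | x ∈ C ∧ lam x = 0} ∩ F = {0} := by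
    apply Set.eq_singleton_iff_unique_mem.mpr
    constructor
    · exact ⟨⟨h0C, map_zero lam⟩, by rw [hF]; exact ⟨h0C, map_zero τ⟩⟩
    · rintro x ⟨⟨hxC, hxlam⟩, hxF⟩
      rw [hF] at hxF
      obtain ⟨-, hxτ⟩ := hxF
      obtain ⟨c', hc', rfl⟩ := repC x hxC
      rw [τsum] at hxτ
      rw [lamsum] at hxlam
      have hτt : ∀ i ∈ Finset.univ, c' i * τ (v i) = 0 :=
        (Finset.sum_eq_zero_iff_of_nonneg
          (fun i _ => mul_nonneg (hc' i) (hτv i))).mp hxτ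
      have hlt2 : ∀ i ∈ Finset.univ, c' i * lam (v i) = 0 :=
        (Finset.sum_eq_zero_iff_of_nonneg
          (fun i _ => mul_nonneg (hc' i) (hlamv0 i))).mp hxlam
      apply Finset.sum_eq_zero
      intro i _
      by_cases hci : c' i = 0
      · rw [hci, zero_smul]
      · have hτvi : τ (v i) = 0 := by
          rcases mul_eq_zero.mp (hτt i (Finset.mem_univ i)) with h | h
          · exact absurd h hci
          · exact h
        have hlvi : lam (v i) = 0 := by
          rcases mul_eq_zero.mp (hlt2 i (Finset.mem_univ i)) with h | h
          · exact absurd h hci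
          · exact h
        have hvi0 : v i = 0 := by
          by_contra hvi
          have hσvi := hσpos i hvi
          have hgi : gv i = hv i + σ (v i) • rvec := by
            rw [hgdef, hhdef, hrdef]
            rw [Prod.ext_iff, Prod.ext_iff]
            simp [hτvi]
          have hψgi : ψ (gv i) = ψ (hv i) + σ (v i) * η := by
            rw [hgi, map_add, map_smul, smul_eq_mul, hηdef]
          have hψgi0 : ψ (gv i) = 0 := by
            rw [hlamv] at hlvi
            rcases mul_eq_zero.mp hlvi with h | h
            · exact absurd h (inv_ne_zero hη.ne')
            · exact h
          nlinarith [hψh i, hσvi, hη]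
        rw [hvi0, smul_zero]
  refine ⟨b'', hb''C, hτb'', ⟨lam, hlamC, ⟨hb''C, hlamb''⟩, hface⟩, ?_⟩
  rw [Set.mem_vadd_set]
  refine ⟨b - b'', hbb''C, ?_⟩
  rw [vadd_eq_add]; abel
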